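/- Let $a_1, b_1, a_2, b_2 > 0$ and suppose there exists $c > 0$ such that (i) $a_1^2 + b_1^2 + 2 = c(a_2^2 + b_2^2 + 2)$, (ii) $a_1 + b_1 = c(a_2 + b_2)$, and (iii) $1 + a_1 b_1 = c(1 + a_2 b_2)$. Then either $a_1 + b_1 = a_2 + b_2$ or $(a_1+b_1)(a_2+b_2) = 4$. -/
import Mathlib

theorem stmt_2 (a₁ b₁ a₂ b₂ c : ℝ) (ha₁ : 0 < a₁) (hb₁ : 0 < b₁) (ha₂ : 0 < a₂)
    (hb₂ : 0 < b₂) (hc : 0 < c)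
    (h1 : a₁ ^ 2 + b₁ ^ 2 + 2 = c * (a₂ ^ 2 + b₂ ^ 2 + 2))
    (h2 : a₁ + b₁ = c * (a₂ + b₂))
    (h3 : 1 + a₁ * b₁ = c * (1 + a₂ * b₂)) :
    a₁ + b₁ = a₂ + b₂ ∨ (a₁ + b₁) * (a₂ + b₂) = 4 := by
  have key : ((a₁ + b₁) - (a₂ + b₂)) * ((a₁ + b₁) * (a₂ + b₂) - 4) = 0 := by
    linear_combination (a₂ + b₂) * (h1 + 2 * h3) - ((a₂ + b₂) ^ 2 + 4) * h2
  rcases mul_eq_zero.mp key with h | h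
  · left; linarith
  · right; linarith
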